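/- For every odd integer r ≥ 3 and every positive integer k, the tree T_{r,k} on (r+6)k+1 vertices built from k copies of the path P_{r+6} whose central vertices are all joined to one new vertex v has at least 15^k r-matchings. Hence the maximum number of r-matchings over trees of order n is Ω(15^{n/(r+6)}). -/

import Mathlib

/-- distance between two edges of a graph: the minimum graph distance between an
endpoint of one and an endpoint of the other. -/
noncomputable def edgeDist {V : Type*} (G : SimpleGraph V) (e f : Sym2 V) : ℕ :=
  sInf {d : ℕ | ∃ u ∈ e, ∃ v ∈ f, d = G.dist u v}

/-- an `r`-matching: a set of edges of `G`, any two distinct ones at distance at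
least `r`. -/
def IsRMatching {V : Type*} (G : SimpleGraph V) (r : ℕ) (M : Set (Sym2 V)) : Prop :=
  M ⊆ G.edgeSet ∧ ∀ e ∈ M, ∀ f ∈ M, e ≠ f → r ≤ edgeDist G e f

/-- the tree obtained from `k` disjoint copies of the path on `r + 6` vertices by
joining the central vertex of each copy to one new vertex (the vertex `none`). -/
def treePr6 (r k : ℕ) : SimpleGraph (Option (Fin k × Fin (r + 6))) :=
  SimpleGraph.fromRel (fun x y =>
    (∃ (i : Fin k) (a : Fin (r + 5)), x = some (i, a.castSucc) ∧ y = some (i, a.succ)) ∨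
    (x = none ∧ ∃ i : Fin k,
      y = some (i, ⟨(r + 5) / 2, Nat.lt_succ_of_le (Nat.div_le_self (r + 5) 2)⟩)))

namespace Stmt13Aux
open SimpleGraph

/-! ### Generic lemmas -/

lemma dist_lower_bound {V : Type*} {G : SimpleGraph V} (φ : V → ℤ)
    (hφ : ∀ ⦃x y⦄, G.Adj x y → |φ x - φ y| ≤ 1) {u v : V} (h : G.Reachable u v) :
    |φ u - φ v| ≤ (G.dist u v : ℤ) := by
  obtain ⟨p, hp⟩ := h.exists_walk_length_eq_dist
  rw [← hp]
  clear hp h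
  induction p with
  | nil => simp
  | @cons a b c hab q ih =>
    calc |φ a - φ c| ≤ |φ a - φ b| + |φ b - φ c| := abs_sub_le _ _ _
      _ ≤ 1 + q.length := add_le_add (hφ hab) ih
      _ ≤ _ := by simp [SimpleGraph.Walk.length_cons]; omega

lemma isAcyclic_of_parent {V : Type*} {G : SimpleGraph V} (par : V → V) (ht : V → ℕ)
    (H : ∀ ⦃x y⦄, G.Adj x y → (y = par x ∧ ht y < ht x) ∨ (x = par y ∧ ht x < ht y)) :
    G.IsAcyclic := by
  classical
  intro v c hc
  have hne : c.support ≠ [] := by simp [SimpleGraph.Walk.support_ne_nil]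
  obtain ⟨u, hu⟩ : ∃ u, u ∈ c.support.argmax ht := by
    rcases hau : c.support.argmax ht with _ | u
    · exact absurd (List.argmax_eq_none.mp hau) hne
    · exact ⟨u, by simp [hau]⟩
  have humem : u ∈ c.support := List.argmax_mem hu
  have hmax : ∀ x ∈ c.support, ht x ≤ ht u := fun x hx => List.le_of_mem_argmax hx hu
  have hc' : (c.rotate u humem).IsCycle := hc.rotate humem
  have hsub : ∀ x ∈ (c.rotate u humem).support.tail, x ∈ c.support := by
    intro x hx
    exact List.mem_of_mem_tail (((SimpleGraph.Walk.support_rotate c u humem).mem_iff).1 hx)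
  have h3 := hc'.three_le_length
  obtain ⟨x, hadj, q, hq⟩ := SimpleGraph.Walk.not_nil_iff.mp hc'.not_nil
  rw [hq] at hc' hsub h3
  rw [SimpleGraph.Walk.cons_isCycle_iff] at hc'
  obtain ⟨hqpath, hqe⟩ := hc'
  have hq2 : 2 ≤ q.length := by
    rw [SimpleGraph.Walk.length_cons] at h3; omega
  obtain ⟨y, hadj', q2, hqr⟩ := SimpleGraph.Walk.not_nil_iff.mp
    (by rw [SimpleGraph.Walk.not_nil_iff_lt_length, SimpleGraph.Walk.length_reverse]; omega :
      ¬ q.reverse.Nil)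
  have hxs : x ∈ c.support := hsub x (by simp)
  have hys : y ∈ c.support := by
    refine hsub y ?_
    have : y ∈ q.reverse.support := by rw [hqr]; simp
    rw [SimpleGraph.Walk.support_reverse, List.mem_reverse] at this
    simpa using this
  have hx1 : x = par u := by
    rcases H hadj with ⟨h1, _⟩ | ⟨_, h2⟩
    · exact h1
    · exact absurd (hmax x hxs) (by omega)
  have hy1 : y = par u := by
    rcases H hadj' with ⟨h1, _⟩ | ⟨_, h2⟩
    · exact h1
    · exact absurd (hmax y hys) (by omega)
  have : s(u, y) ∈ q.edges := by
    have : s(u, y) ∈ q.reverse.edges := by rw [hqr]; simp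
    rwa [SimpleGraph.Walk.edges_reverse, List.mem_reverse] at this
  rw [hy1, ← hx1] at this
  exact hqe this

/-! ### The counting machinery -/

def Cfg : Type := {p : Fin 4 × Fin 4 // ¬(p.1 = 2 ∧ p.2 = 0)}

instance : Fintype Cfg := by unfold Cfg; infer_instance

lemma card_Cfg : Nat.card Cfg = 15 := by
  rw [Nat.card_eq_fintype_card]; decide

def lidx (f : Cfg) : ℕ := f.1.1
def ridx (f : Cfg) : ℕ := f.1.2

lemma lidx_lt (f : Cfg) : lidx f < 4 := f.1.1.isLt
lemma ridx_lt (f : Cfg) : ridx f < 4 := f.1.2.isLt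

lemma cfg_valid (f : Cfg) : ¬(lidx f = 2 ∧ ridx f = 0) := by
  rintro ⟨h1, h2⟩
  exact f.2 ⟨Fin.ext h1, Fin.ext h2⟩

variable {V : Type*} {r k m : ℕ}

def edg (ι : Fin k × Fin (r + 6) → V) (i : Fin k) (u : ℕ) (h : u + 1 < r + 6) : Sym2 V :=
  s(ι (i, ⟨u, Nat.lt_of_succ_lt h⟩), ι (i, ⟨u + 1, h⟩))

lemma edg_eq_iff {ι : Fin k × Fin (r + 6) → V} (hι : Function.Injective ι)
    {i j : Fin k} {u w : ℕ} {hu : u + 1 < r + 6} {hw : w + 1 < r + 6} :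
    edg ι i u hu = edg ι j w hw ↔ i = j ∧ u = w := by
  constructor
  · intro h
    rw [edg, edg, Sym2.eq_iff] at h
    rcases h with ⟨h1, h2⟩ | ⟨h1, h2⟩
    · have := hι h1
      simp only [Prod.mk.injEq, Fin.mk.injEq] at this
      exact this
    · have e1 := hι h1
      have e2 := hι h2
      simp only [Prod.mk.injEq, Fin.mk.injEq] at e1 e2
      omega
  · rintro ⟨rfl, rfl⟩; rfl

def cfgSet (ι : Fin k × Fin (r + 6) → V) (f : Fin k → Cfg) : Set (Sym2 V) :=
  {e | ∃ i : Fin k,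
    (∃ _ : lidx (f i) < 3, e = edg ι i (lidx (f i)) (by omega)) ∨
    (∃ _ : ridx (f i) < 3, e = edg ι i (r + 2 + ridx (f i)) (by omega))}

lemma mem_cfgSet_decode {ι : Fin k × Fin (r + 6) → V} (hι : Function.Injective ι)
    {f : Fin k → Cfg} {i : Fin k} {u : ℕ} {hu : u + 1 < r + 6}
    (h : edg ι i u hu ∈ cfgSet ι f) :
    (u = lidx (f i) ∧ u < 3) ∨ (u = r + 2 + ridx (f i) ∧ ridx (f i) < 3) := by
  obtain ⟨j, hj | hj⟩ := h <;> obtain ⟨h3, he⟩ := hj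
  · obtain ⟨rfl, h4⟩ := (edg_eq_iff hι).mp he
    exact Or.inl ⟨h4, by omega⟩
  · obtain ⟨rfl, h4⟩ := (edg_eq_iff hι).mp he
    exact Or.inr ⟨h4, h3⟩

lemma count_lemma [Finite V] {G : SimpleGraph V} (hr : 3 ≤ r)
    {c : ℕ} (hc : 2 * c = r + 5)
    (ι : Fin k × Fin (r + 6) → V) (hι : Function.Injective ι)
    (hadj : ∀ (i : Fin k) (u : ℕ) (h : u + 1 < r + 6),
      G.Adj (ι (i, ⟨u, Nat.lt_of_succ_lt h⟩)) (ι (i, ⟨u + 1, h⟩)))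
    (hreach : ∀ p q : Fin k × Fin (r + 6), G.Reachable (ι p) (ι q))
    (hφ₁ : ∀ i : Fin k, ∃ φ : V → ℤ, (∀ ⦃x y⦄, G.Adj x y → |φ x - φ y| ≤ 1) ∧
      ∀ a : Fin (r + 6), φ (ι (i, a)) = ((a : ℕ) : ℤ))
    (hφ₂ : ∀ i j : Fin k, i ≠ j → ∃ φ : V → ℤ, (∀ ⦃x y⦄, G.Adj x y → |φ x - φ y| ≤ 1) ∧
      (∀ a : Fin (r + 6), φ (ι (i, a)) = |((a : ℕ) : ℤ) - c| + 1) ∧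
      (∀ a : Fin (r + 6), φ (ι (j, a)) = -(|((a : ℕ) : ℤ) - c| + 1))) :
    15 ^ k ≤ Nat.card {M : Set (Sym2 V) // IsRMatching G r M} := by
  classical
  have hdist_same : ∀ (i : Fin k) (u w : ℕ) (hu : u < r + 6) (hw : w < r + 6),
      u + r ≤ w → r ≤ G.dist (ι (i, ⟨u, hu⟩)) (ι (i, ⟨w, hw⟩)) := by
    intro i u w hu hw huw
    obtain ⟨φ, hL, hval⟩ := hφ₁ i
    have hb := dist_lower_bound φ hL (hreach (i, ⟨u, hu⟩) (i, ⟨w, hw⟩))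
    rw [hval ⟨u, hu⟩, hval ⟨w, hw⟩] at hb
    have habs : (r : ℤ) ≤ |(((⟨u, hu⟩ : Fin (r+6)) : ℕ) : ℤ) - (((⟨w, hw⟩ : Fin (r+6)) : ℕ) : ℤ)| := by
      simp only [Fin.val_mk]
      rw [abs_sub_comm, abs_of_nonneg (by push_cast; omega)]
      push_cast; omega
    exact_mod_cast le_trans habs hb
  have hdist_cross : ∀ (i j : Fin k), i ≠ j → ∀ (u w : ℕ) (hu : u < r + 6) (hw : w < r + 6),
      (u ≤ 3 ∨ r + 2 ≤ u) → (w ≤ 3 ∨ r + 2 ≤ w) →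
      r ≤ G.dist (ι (i, ⟨u, hu⟩)) (ι (j, ⟨w, hw⟩)) := by
    intro i j hij u w hu hw hu3 hw3
    obtain ⟨φ, hL, hvi, hvj⟩ := hφ₂ i j hij
    have hb := dist_lower_bound φ hL (hreach (i, ⟨u, hu⟩) (j, ⟨w, hw⟩))
    rw [hvi ⟨u, hu⟩, hvj ⟨w, hw⟩] at hb
    have habs : (r : ℤ) ≤ |(|(((⟨u, hu⟩ : Fin (r+6)) : ℕ) : ℤ) - c| + 1) -
        (-(|(((⟨w, hw⟩ : Fin (r+6)) : ℕ) : ℤ) - c| + 1))| := by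
      simp only [Fin.val_mk]
      rw [sub_neg_eq_add, abs_of_nonneg (by positivity)]
      rcases abs_cases (((u : ℕ) : ℤ) - c) with ⟨h1, _⟩ | ⟨h1, _⟩ <;>
        rcases abs_cases (((w : ℕ) : ℤ) - c) with ⟨h2, _⟩ | ⟨h2, _⟩ <;>
        rw [h1, h2] <;> omega
    exact_mod_cast le_trans habs hb
  have edist_le : ∀ (i j : Fin k) (u w : ℕ) (hu : u + 1 < r + 6) (hw : w + 1 < r + 6),
      (∀ (x y : ℕ) (hx : x < r + 6) (hy : y < r + 6), (x = u ∨ x = u + 1) →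
        (y = w ∨ y = w + 1) → r ≤ G.dist (ι (i, ⟨x, hx⟩)) (ι (j, ⟨y, hy⟩))) →
      r ≤ edgeDist G (edg ι i u hu) (edg ι j w hw) := by
    intro i j u w hu hw H
    refine le_csInf ⟨G.dist (ι (i, ⟨u, Nat.lt_of_succ_lt hu⟩)) (ι (j, ⟨w, Nat.lt_of_succ_lt hw⟩)),
      ι (i, ⟨u, Nat.lt_of_succ_lt hu⟩), by simp [edg], ι (j, ⟨w, Nat.lt_of_succ_lt hw⟩),
      by simp [edg], rfl⟩ ?_
    rintro d ⟨p, hp, q, hq, rfl⟩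
    rw [edg, Sym2.mem_iff] at hp hq
    rcases hp with rfl | rfl <;> rcases hq with rfl | rfl
    · exact H u w _ _ (Or.inl rfl) (Or.inl rfl)
    · exact H u (w + 1) _ _ (Or.inl rfl) (Or.inr rfl)
    · exact H (u + 1) w _ _ (Or.inr rfl) (Or.inl rfl)
    · exact H (u + 1) (w + 1) _ _ (Or.inr rfl) (Or.inr rfl)
  have hmatch : ∀ f : Fin k → Cfg, IsRMatching G r (cfgSet ι f) := by
    intro f
    constructor
    · rintro e ⟨i, hj | hj⟩ <;> obtain ⟨h3, rfl⟩ := hj <;>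
        exact (G.mem_edgeSet).mpr (hadj i _ _)
    · intro e he e' he' hne
      obtain ⟨i, hi⟩ := he
      obtain ⟨j, hj⟩ := he'
      rcases eq_or_ne i j with rfl | hij
      · rcases hi with ⟨h3, rfl⟩ | ⟨h3, rfl⟩ <;> rcases hj with ⟨h4, rfl⟩ | ⟨h4, rfl⟩
        · exact absurd rfl hne
        · have hval := cfg_valid (f i)
          refine edist_le i i _ _ _ _ ?_
          rintro x y hx hy (rfl | rfl) (rfl | rfl) <;>
            exact hdist_same i _ _ _ _ (by have := lidx_lt (f i); omega)
        · have hval := cfg_valid (f i)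
          refine edist_le i i _ _ _ _ ?_
          rintro x y hx hy (rfl | rfl) (rfl | rfl) <;>
            · rw [SimpleGraph.dist_comm]
              exact hdist_same i _ _ _ _ (by have := lidx_lt (f i); omega)
        · exact absurd rfl hne
      · rcases hi with ⟨h3, rfl⟩ | ⟨h3, rfl⟩ <;> rcases hj with ⟨h4, rfl⟩ | ⟨h4, rfl⟩ <;>
          · refine edist_le i j _ _ _ _ ?_
            rintro x y hx hy (rfl | rfl) (rfl | rfl) <;>
              exact hdist_cross i j hij _ _ _ _ (by omega) (by omega)
  have hinj : Function.Injective (cfgSet ι (r := r) (k := k)) := by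
    have main : ∀ f g : Fin k → Cfg, cfgSet ι f = cfgSet ι g → ∀ i : Fin k,
        (lidx (f i) < 3 → lidx (f i) = lidx (g i)) ∧
        (ridx (f i) < 3 → ridx (f i) = ridx (g i)) := by
      intro f g hfg i
      constructor
      · intro hl
        have hm : edg ι i (lidx (f i)) (by omega) ∈ cfgSet ι g := by
          rw [← hfg]; exact ⟨i, Or.inl ⟨hl, rfl⟩⟩
        rcases mem_cfgSet_decode hι hm with ⟨h1, _⟩ | ⟨h1, h2⟩
        · exact h1
        · omega
      · intro hrx
        have hm : edg ι i (r + 2 + ridx (f i)) (by omega) ∈ cfgSet ι g := by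
          rw [← hfg]; exact ⟨i, Or.inr ⟨hrx, rfl⟩⟩
        rcases mem_cfgSet_decode hι hm with ⟨h1, _⟩ | ⟨h1, _⟩
        · omega
        · omega
    intro f g hfg
    funext i
    have h1 := main f g hfg i
    have h2 := main g f hfg.symm i
    have hl : lidx (f i) = lidx (g i) := by
      by_cases ha : lidx (f i) < 3
      · exact h1.1 ha
      · by_cases hb : lidx (g i) < 3
        · exact (h2.1 hb).symm
        · have := lidx_lt (f i); have := lidx_lt (g i); omega
    have hrr : ridx (f i) = ridx (g i) := by
      by_cases ha : ridx (f i) < 3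
      · exact h1.2 ha
      · by_cases hb : ridx (g i) < 3
        · exact (h2.2 hb).symm
        · have := ridx_lt (f i); have := ridx_lt (g i); omega
    exact Subtype.ext (Prod.ext (Fin.ext hl) (Fin.ext hrr))
  have hcard : (15 : ℕ) ^ k = Nat.card (Fin k → Cfg) := by
    rw [Nat.card_eq_fintype_card, Fintype.card_fun, Fintype.card_fin,
      ← Nat.card_eq_fintype_card, card_Cfg]
  rw [hcard]
  exact Nat.card_le_card_of_injective
    (fun f => (⟨cfgSet ι f, hmatch f⟩ : {M : Set (Sym2 V) // IsRMatching G r M}))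
    (fun f g h => hinj (congrArg Subtype.val h))

/-! ### The tree `treePr6` -/

def relT (r k : ℕ) : Option (Fin k × Fin (r + 6)) → Option (Fin k × Fin (r + 6)) → Prop :=
  fun x y =>
    (∃ (i : Fin k) (a : Fin (r + 5)), x = some (i, a.castSucc) ∧ y = some (i, a.succ)) ∨
    (x = none ∧ ∃ i : Fin k,
      y = some (i, ⟨(r + 5) / 2, Nat.lt_succ_of_le (Nat.div_le_self (r + 5) 2)⟩))

lemma treePr6_eq (r k : ℕ) : treePr6 r k = SimpleGraph.fromRel (relT r k) := rfl

lemma relT_step (i : Fin k) (u : ℕ) (h : u + 1 < r + 6) :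
    relT r k (some (i, ⟨u, Nat.lt_of_succ_lt h⟩)) (some (i, ⟨u + 1, h⟩)) :=
  Or.inl ⟨i, ⟨u, by omega⟩, rfl, rfl⟩

lemma relT_center (i : Fin k) (h : (r + 5) / 2 < r + 6) :
    relT r k none (some (i, ⟨(r + 5) / 2, h⟩)) := Or.inr ⟨rfl, i, rfl⟩

lemma tree_adj (i : Fin k) (u : ℕ) (h : u + 1 < r + 6) :
    (treePr6 r k).Adj (some (i, ⟨u, Nat.lt_of_succ_lt h⟩)) (some (i, ⟨u + 1, h⟩)) := by
  rw [treePr6_eq, SimpleGraph.fromRel_adj]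
  refine ⟨?_, Or.inl (relT_step i u h)⟩
  intro hcon
  simp only [Option.some.injEq, Prod.mk.injEq, Fin.mk.injEq] at hcon
  omega

lemma tree_adj_center (i : Fin k) (h : (r + 5) / 2 < r + 6) :
    (treePr6 r k).Adj none (some (i, ⟨(r + 5) / 2, h⟩)) := by
  rw [treePr6_eq, SimpleGraph.fromRel_adj]
  exact ⟨by simp, Or.inl (relT_center i h)⟩

lemma tree_reach (i : Fin k) (u : ℕ) (h : u < r + 6) :
    (treePr6 r k).Reachable (some (i, ⟨u, h⟩)) none := by
  have chain : ∀ (d a : ℕ) (h1 : a + d < r + 6),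
      (treePr6 r k).Reachable (some (i, ⟨a, by omega⟩)) (some (i, ⟨a + d, h1⟩)) := by
    intro d
    induction d with
    | zero => intro a h1; exact SimpleGraph.Reachable.refl _
    | succ d ih =>
      intro a h1
      exact (ih a (by omega)).trans (tree_adj i (a + d) (by omega)).reachable
  have hcd : (r + 5) / 2 < r + 6 := by omega
  rcases le_or_gt u ((r + 5) / 2) with hcu | hcu
  · have h1 := chain ((r + 5) / 2 - u) u (by omega)
    have he : (⟨u + ((r + 5) / 2 - u), by omega⟩ : Fin (r + 6)) = ⟨(r + 5) / 2, hcd⟩ := by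
      simp only [Fin.mk.injEq]; omega
    rw [he] at h1
    exact h1.trans (tree_adj_center i hcd).symm.reachable
  · have h1 := chain (u - (r + 5) / 2) ((r + 5) / 2) (by omega)
    have he : (⟨(r + 5) / 2 + (u - (r + 5) / 2), by omega⟩ : Fin (r + 6)) = ⟨u, h⟩ := by
      simp only [Fin.mk.injEq]; omega
    rw [he] at h1
    exact h1.symm.trans (tree_adj_center i hcd).symm.reachable

def phi1 (r k : ℕ) (cc : ℕ) (i : Fin k) : Option (Fin k × Fin (r + 6)) → ℤ
  | none => cc
  | some (j, a) => if j = i then ((a : ℕ) : ℤ) else cc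

def phi2 (r k : ℕ) (cc : ℕ) (i j : Fin k) : Option (Fin k × Fin (r + 6)) → ℤ
  | none => 0
  | some (l, a) =>
    if l = i then |((a : ℕ) : ℤ) - cc| + 1
    else if l = j then -(|((a : ℕ) : ℤ) - cc| + 1) else 0

lemma phi1_rel {cc : ℕ} (hcc : cc = (r + 5) / 2) (i : Fin k)
    {x y : Option (Fin k × Fin (r + 6))} (h : relT r k x y) :
    |phi1 r k cc i x - phi1 r k cc i y| ≤ 1 := by
  rcases h with ⟨i', a, rfl, rfl⟩ | ⟨rfl, i', rfl⟩
  · simp only [phi1]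
    by_cases hii : i' = i
    · simp only [if_pos hii, Fin.coe_castSucc, Fin.val_succ]
      rw [abs_le]; constructor <;> push_cast <;> omega
    · simp [hii]
  · simp only [phi1]
    by_cases hii : i' = i
    · simp [hii, hcc]
    · simp [hii]

lemma phi2_rel {cc : ℕ} (hcc : cc = (r + 5) / 2) (i j : Fin k)
    {x y : Option (Fin k × Fin (r + 6))} (h : relT r k x y) :
    |phi2 r k cc i j x - phi2 r k cc i j y| ≤ 1 := by
  rcases h with ⟨l, a, rfl, rfl⟩ | ⟨rfl, l, rfl⟩
  · simp only [phi2, Fin.coe_castSucc, Fin.val_succ]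
    have key : |(|((a : ℕ) : ℤ) - cc| + 1 - (|(((a : ℕ) : ℤ) + 1) - cc| + 1))| ≤ 1 := by
      rw [abs_le]
      rcases abs_cases (((a : ℕ) : ℤ) - cc) with ⟨h1, _⟩ | ⟨h1, _⟩ <;>
        rcases abs_cases ((((a : ℕ) : ℤ) + 1) - cc) with ⟨h2, _⟩ | ⟨h2, _⟩ <;>
          rw [h1, h2] <;> constructor <;> omega
    by_cases hli : l = i
    · simpa [hli] using key
    · by_cases hlj : l = j
      · simp only [if_neg hli, if_pos hlj]
        rw [abs_le] at key ⊢
        constructor <;> push_cast at key ⊢ <;> omega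
      · simp [hli, hlj]
  · simp only [phi2]
    by_cases hli : l = i
    · simp [hli, hcc]
    · by_cases hlj : l = j
      · subst hlj; simp [hli, hcc]
      · simp [hli, hlj]

lemma tree_lip1 {cc : ℕ} (hcc : cc = (r + 5) / 2) (i : Fin k) :
    ∀ ⦃x y⦄, (treePr6 r k).Adj x y → |phi1 r k cc i x - phi1 r k cc i y| ≤ 1 := by
  intro x y h
  rw [treePr6_eq, SimpleGraph.fromRel_adj] at h
  rcases h.2 with h2 | h2
  · exact phi1_rel hcc i h2
  · rw [abs_sub_comm]; exact phi1_rel hcc i h2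

lemma tree_lip2 {cc : ℕ} (hcc : cc = (r + 5) / 2) (i j : Fin k) :
    ∀ ⦃x y⦄, (treePr6 r k).Adj x y → |phi2 r k cc i j x - phi2 r k cc i j y| ≤ 1 := by
  intro x y h
  rw [treePr6_eq, SimpleGraph.fromRel_adj] at h
  rcases h.2 with h2 | h2
  · exact phi2_rel hcc i j h2
  · rw [abs_sub_comm]; exact phi2_rel hcc i j h2

/-! ### The extended tree with a pendant path at the root -/

def relB (r k m : ℕ) :
    (Option (Fin k × Fin (r + 6)) ⊕ Fin m) → (Option (Fin k × Fin (r + 6)) ⊕ Fin m) → Prop :=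
  fun x y =>
    (∃ x' y', x = Sum.inl x' ∧ y = Sum.inl y' ∧ relT r k x' y') ∨
    (∃ j : Fin m, (j : ℕ) = 0 ∧ x = Sum.inl none ∧ y = Sum.inr j) ∨
    (∃ j j' : Fin m, (j' : ℕ) = (j : ℕ) + 1 ∧ x = Sum.inr j ∧ y = Sum.inr j')

def Gbig (r k m : ℕ) : SimpleGraph (Option (Fin k × Fin (r + 6)) ⊕ Fin m) :=
  SimpleGraph.fromRel (relB r k m)

def projB : (Option (Fin k × Fin (r + 6)) ⊕ Fin m) → Option (Fin k × Fin (r + 6)) :=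
  Sum.elim id (fun _ => none)

lemma big_adj_proj {x y : Option (Fin k × Fin (r + 6)) ⊕ Fin m} (h : (Gbig r k m).Adj x y) :
    (treePr6 r k).Adj (projB x) (projB y) ∨ projB x = projB y := by
  rw [Gbig, SimpleGraph.fromRel_adj] at h
  have main : ∀ x y : Option (Fin k × Fin (r + 6)) ⊕ Fin m, x ≠ y → relB r k m x y →
      (treePr6 r k).Adj (projB x) (projB y) ∨ projB x = projB y := by
    rintro x y hne (⟨x', y', rfl, rfl, hrel⟩ | ⟨j, hj, rfl, rfl⟩ | ⟨j, j', hj, rfl, rfl⟩)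
    · left
      rw [treePr6_eq, SimpleGraph.fromRel_adj]
      exact ⟨fun hcon => hne (congrArg Sum.inl (hcon : x' = y')), Or.inl hrel⟩
    · right; rfl
    · right; rfl
  rcases h.2 with h2 | h2
  · exact main _ _ h.1 h2
  · rcases main _ _ (Ne.symm h.1) h2 with h' | h'
    · exact Or.inl h'.symm
    · exact Or.inr h'.symm

lemma big_hom : ∀ ⦃x' y'⦄, (treePr6 r k).Adj x' y' →
    (Gbig r k m).Adj (Sum.inl x') (Sum.inl y') := by
  intro x' y' h
  rw [treePr6_eq, SimpleGraph.fromRel_adj] at h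
  rw [Gbig, SimpleGraph.fromRel_adj]
  refine ⟨fun hcon => h.1 (Sum.inl.inj hcon), ?_⟩
  rcases h.2 with h2 | h2
  · exact Or.inl (Or.inl ⟨x', y', rfl, rfl, h2⟩)
  · exact Or.inr (Or.inl ⟨y', x', rfl, rfl, h2⟩)

lemma big_reach_root (x : Option (Fin k × Fin (r + 6)) ⊕ Fin m) :
    (Gbig r k m).Reachable x (Sum.inl none) := by
  rcases x with x' | j
  · have hrt : (treePr6 r k).Reachable x' none := by
      rcases x' with _ | ⟨i, a⟩
      · exact SimpleGraph.Reachable.refl _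
      · exact tree_reach i a a.isLt
    exact hrt.map (⟨Sum.inl, fun h => big_hom h⟩ : treePr6 r k →g Gbig r k m)
  · have key : ∀ (t : ℕ) (j : Fin m), (j : ℕ) = t →
        (Gbig r k m).Reachable (Sum.inr j) (Sum.inl none) := by
      intro t
      induction t with
      | zero =>
        intro j hj
        have hadjr : (Gbig r k m).Adj (Sum.inl none) (Sum.inr j) := by
          rw [Gbig, SimpleGraph.fromRel_adj]
          exact ⟨by simp, Or.inl (Or.inr (Or.inl ⟨j, hj, rfl, rfl⟩))⟩
        exact hadjr.symm.reachable
      | succ t ih =>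
        intro j hj
        have hm : t < m := by have := j.isLt; omega
        have hadjr : (Gbig r k m).Adj (Sum.inr (⟨t, hm⟩ : Fin m)) (Sum.inr j) := by
          rw [Gbig, SimpleGraph.fromRel_adj]
          refine ⟨?_, Or.inl (Or.inr (Or.inr ⟨⟨t, hm⟩, j, by simp only [Fin.val_mk]; omega,
            rfl, rfl⟩))⟩
          intro hcon
          have hval : t = (j : ℕ) := congrArg Fin.val (Sum.inr.inj hcon)
          omega
        exact hadjr.symm.reachable.trans (ih ⟨t, hm⟩ rfl)
    exact key _ j rfl

lemma big_connected : (Gbig r k m).Connected := by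
  rw [SimpleGraph.connected_iff]
  exact ⟨fun x y => (big_reach_root x).trans (big_reach_root y).symm, ⟨Sum.inl none⟩⟩

def htB (r k m : ℕ) : (Option (Fin k × Fin (r + 6)) ⊕ Fin m) → ℕ
  | Sum.inl none => 0
  | Sum.inl (some (_, a)) =>
    (if (a : ℕ) ≤ (r + 5) / 2 then (r + 5) / 2 - (a : ℕ) else (a : ℕ) - (r + 5) / 2) + 1
  | Sum.inr j => (j : ℕ) + 1

def parB (r k m : ℕ) :
    (Option (Fin k × Fin (r + 6)) ⊕ Fin m) → (Option (Fin k × Fin (r + 6)) ⊕ Fin m)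
  | Sum.inl none => Sum.inl none
  | Sum.inl (some (i, a)) =>
    if _ : (a : ℕ) < (r + 5) / 2 then Sum.inl (some (i, ⟨(a : ℕ) + 1, by omega⟩))
    else if _ : (r + 5) / 2 < (a : ℕ) then
      Sum.inl (some (i, ⟨(a : ℕ) - 1, by have := a.isLt; omega⟩))
    else Sum.inl none
  | Sum.inr j =>
    if _ : (j : ℕ) = 0 then Sum.inl none else Sum.inr ⟨(j : ℕ) - 1, by have := j.isLt; omega⟩

lemma big_parent : ∀ ⦃x y⦄, (Gbig r k m).Adj x y →
    (y = parB r k m x ∧ htB r k m y < htB r k m x) ∨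
    (x = parB r k m y ∧ htB r k m x < htB r k m y) := by
  have main : ∀ x y, x ≠ y → relB r k m x y →
      (y = parB r k m x ∧ htB r k m y < htB r k m x) ∨
      (x = parB r k m y ∧ htB r k m x < htB r k m y) := by
    rintro x y hne (⟨x', y', rfl, rfl, hrel⟩ | ⟨j, hj, rfl, rfl⟩ | ⟨j, j', hj, rfl, rfl⟩)
    · rcases hrel with ⟨i, a, rfl, rfl⟩ | ⟨rfl, i, rfl⟩
      · have hlt := a.isLt
        by_cases hb : (a : ℕ) < (r + 5) / 2
        · left
          constructor
          · simp only [parB, Fin.coe_castSucc, dif_pos hb]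
            simp [Fin.ext_iff]
          · simp only [htB, Fin.coe_castSucc, Fin.val_succ]
            split_ifs <;> omega
        · right
          constructor
          · have hb' : ¬ ((Fin.succ a : Fin (r + 6)) : ℕ) < (r + 5) / 2 := by
              simp only [Fin.val_succ]; omega
            have hb'' : (r + 5) / 2 < ((Fin.succ a : Fin (r + 6)) : ℕ) := by
              simp only [Fin.val_succ]; omega
            simp only [parB, dif_neg hb', dif_pos hb'']
            simp [Fin.ext_iff]
          · simp only [htB, Fin.coe_castSucc, Fin.val_succ]
            split_ifs <;> omega
      · right
        constructor
        · have h1 : ¬ (((⟨(r + 5) / 2, Nat.lt_succ_of_le (Nat.div_le_self (r + 5) 2)⟩ :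
              Fin (r + 6))) : ℕ) < (r + 5) / 2 := by simp
          simp only [parB, dif_neg h1, dif_neg (lt_irrefl ((r + 5) / 2))]
        · simp [htB]
    · right
      constructor
      · simp only [parB, dif_pos hj]
      · simp [htB]
    · right
      constructor
      · have hj0 : ¬ (j' : ℕ) = 0 := by omega
        simp only [parB, dif_neg hj0]
        simp only [Sum.inr.injEq, Fin.ext_iff]
        omega
      · simp only [htB]; omega
  intro x y h
  rw [Gbig, SimpleGraph.fromRel_adj] at h
  rcases h.2 with h2 | h2
  · exact main x y h.1 h2
  · exact (main y x (Ne.symm h.1) h2).symm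

end Stmt13Aux
open Stmt13Aux

theorem stmt_13 (r : ℕ) (hr : 3 ≤ r) (hodd : Odd r) :
    (∀ k : ℕ, 0 < k →
      15 ^ k ≤ Nat.card {M : Set (Sym2 (Option (Fin k × Fin (r + 6)))) //
        IsRMatching (treePr6 r k) r M}) ∧
    ∃ c : ℝ, 0 < c ∧ ∀ n : ℕ, 1 ≤ n → ∃ T : SimpleGraph (Fin n),
      T.Connected ∧ T.IsAcyclic ∧
      c * (15 : ℝ) ^ ((n : ℝ) / (r + 6 : ℝ)) ≤
        Nat.card {M : Set (Sym2 (Fin n)) // IsRMatching T r M} := by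
  have hc2 : 2 * ((r + 5) / 2) = r + 5 := by
    obtain ⟨t, ht⟩ := hodd; omega
  constructor
  · intro k _
    refine count_lemma hr hc2 (fun p => some p) (fun p q hpq => Option.some.inj hpq)
      (fun i u h => tree_adj i u h)
      (fun p q => (tree_reach p.1 p.2 p.2.isLt).trans (tree_reach q.1 q.2 q.2.isLt).symm)
      (fun i => ⟨phi1 r k ((r + 5) / 2) i, tree_lip1 rfl i, fun a => by simp [phi1]⟩)
      (fun i j hij => ⟨phi2 r k ((r + 5) / 2) i j, tree_lip2 rfl i j,
        fun a => by simp [phi2], fun a => by simp [phi2, (Ne.symm hij : j ≠ i)]⟩)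
  · refine ⟨(15 : ℝ)⁻¹, by norm_num, ?_⟩
    intro n hn
    set k := (n - 1) / (r + 6) with hkdef
    set m := (n - 1) % (r + 6) with hmdef
    have hnm : k * (r + 6) + m = n - 1 := by
      have := Nat.div_add_mod (n - 1) (r + 6)
      rw [mul_comm] at this
      exact this
    have hmlt : m < r + 6 := Nat.mod_lt _ (by omega)
    have hcard : Fintype.card (Option (Fin k × Fin (r + 6)) ⊕ Fin m) = n := by
      simp only [Fintype.card_sum, Fintype.card_option, Fintype.card_prod, Fintype.card_fin]
      omega
    set e := Fintype.equivFinOfCardEq hcard with he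
    refine ⟨(Gbig r k m).map e.toEmbedding, ?_, ?_, ?_⟩
    · exact SimpleGraph.Connected.map
        ⟨⇑e, fun {a b} hab => (SimpleGraph.map_adj _ _ _ _).mpr ⟨a, b, hab, rfl, rfl⟩⟩
        e.surjective big_connected
    · apply isAcyclic_of_parent (fun x => e (parB r k m (e.symm x)))
        (fun x => htB r k m (e.symm x))
      intro x y hxy
      rw [SimpleGraph.map_adj] at hxy
      obtain ⟨a, b, hab, rfl, rfl⟩ := hxy
      simp only [Equiv.coe_toEmbedding, Equiv.symm_apply_apply]
      rcases big_parent hab with ⟨h1, h2⟩ | ⟨h1, h2⟩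
      · exact Or.inl ⟨by rw [h1], h2⟩
      · exact Or.inr ⟨by rw [h1], h2⟩
    · have hle : 15 ^ k ≤
          Nat.card {M : Set (Sym2 (Fin n)) // IsRMatching ((Gbig r k m).map e.toEmbedding) r M} := by
        refine count_lemma hr hc2 (fun p => e (Sum.inl (some p)))
          (fun p q hpq => Option.some.inj (Sum.inl.inj (e.injective hpq)))
          (fun i u h => (SimpleGraph.map_adj _ _ _ _).mpr
            ⟨_, _, big_hom (tree_adj i u h), rfl, rfl⟩)
          (fun p q => ?_) (fun i => ?_) (fun i j hij => ?_)
        · exact (((big_reach_root (Sum.inl (some p))).trans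
            (big_reach_root (Sum.inl (some q))).symm).map
            (⟨⇑e, fun {a b} hab => (SimpleGraph.map_adj _ _ _ _).mpr ⟨a, b, hab, rfl, rfl⟩⟩ :
              Gbig r k m →g (Gbig r k m).map e.toEmbedding))
        · refine ⟨fun x => phi1 r k ((r + 5) / 2) i (projB (e.symm x)), ?_, ?_⟩
          · intro x y hxy
            rw [SimpleGraph.map_adj] at hxy
            obtain ⟨a, b, hab, rfl, rfl⟩ := hxy
            simp only [Equiv.coe_toEmbedding, Equiv.symm_apply_apply]
            rcases big_adj_proj hab with h | h
            · exact tree_lip1 rfl i h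
            · rw [h]; simp
          · intro a
            simp [Equiv.symm_apply_apply, projB, phi1]
        · refine ⟨fun x => phi2 r k ((r + 5) / 2) i j (projB (e.symm x)), ?_, ?_, ?_⟩
          · intro x y hxy
            rw [SimpleGraph.map_adj] at hxy
            obtain ⟨a, b, hab, rfl, rfl⟩ := hxy
            simp only [Equiv.coe_toEmbedding, Equiv.symm_apply_apply]
            rcases big_adj_proj hab with h | h
            · exact tree_lip2 rfl i j h
            · rw [h]; simp
          · intro a
            simp [Equiv.symm_apply_apply, projB, phi2]
          · intro a
            simp [Equiv.symm_apply_apply, projB, phi2, (Ne.symm hij : j ≠ i)]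
      have hexp : (n : ℝ) / ((r : ℝ) + 6) ≤ (k : ℝ) + 1 := by
        rw [div_le_iff₀ (by positivity)]
        have hnle : n ≤ (k + 1) * (r + 6) := by
          have hre : (k + 1) * (r + 6) = k * (r + 6) + (r + 6) := by ring
          omega
        calc (n : ℝ) ≤ ((k + 1) * (r + 6) : ℕ) := by exact_mod_cast hnle
          _ = ((k : ℝ) + 1) * ((r : ℝ) + 6) := by push_cast; ring
      calc (15 : ℝ)⁻¹ * (15 : ℝ) ^ ((n : ℝ) / ((r : ℝ) + 6))
          ≤ (15 : ℝ)⁻¹ * (15 : ℝ) ^ ((k : ℝ) + 1) := by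
            have h1 : (15 : ℝ) ^ ((n : ℝ) / ((r : ℝ) + 6)) ≤ (15 : ℝ) ^ ((k : ℝ) + 1) :=
              Real.rpow_le_rpow_of_exponent_le (by norm_num) hexp
            nlinarith [Real.rpow_nonneg (by norm_num : (0:ℝ) ≤ 15) ((n : ℝ) / ((r : ℝ) + 6))]
        _ = (15 : ℝ) ^ (k : ℕ) := by
            rw [show ((k : ℝ) + 1) = ((k + 1 : ℕ) : ℝ) by push_cast; ring, Real.rpow_natCast,
              pow_succ, mul_comm ((15 : ℝ) ^ k) 15, ← mul_assoc,
              inv_mul_cancel₀ (by norm_num), one_mul]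
        _ ≤ _ := by
            have := hle
            calc ((15 : ℝ) ^ (k : ℕ)) = ((15 ^ k : ℕ) : ℝ) := by push_cast; ring
              _ ≤ _ := by exact_mod_cast hle
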